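/- Bilinear incrementalization formula: if × : S_A × S_B → S_C is a bilinear time-invariant stream operator, then its incremental version satisfies (a × b)^Δ = a × b + z⁻¹(I(a)) × b + a × z⁻¹(I(b)), i.e., D(I(a) × I(b)) = a × b + z⁻¹(I(a)) × b + a × z⁻¹(I(b)). -/

import Mathlib

def delay {A : Type*} [AddCommGroup A] (s : ℕ → A) : ℕ → A
  | 0 => 0
  | (n + 1) => s n

def diff {A : Type*} [AddCommGroup A] (s : ℕ → A) : ℕ → A := s - delay s

def integ {A : Type*} [AddCommGroup A] (s : ℕ → A) : ℕ → A :=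
  fun t => ∑ i ∈ Finset.range (t + 1), s i

theorem integ_key {X : Type*} [AddCommGroup X] (s : ℕ → X) :
    integ s = s + delay (integ s) := by
  funext t
  cases t with
  | zero => simp [integ, delay]
  | succ n =>
      simp only [integ, delay, Pi.add_apply]
      rw [Finset.sum_range_succ]
      abel

theorem incremental_bilinear {A B C : Type*} [AddCommGroup A] [AddCommGroup B] [AddCommGroup C]
    (T : (ℕ → A) → (ℕ → B) → (ℕ → C))
    (hlinL : ∀ (a a' : ℕ → A) (b : ℕ → B), T (a + a') b = T a b + T a' b)
    (hlinR : ∀ (a : ℕ → A) (b b' : ℕ → B), T a (b + b') = T a b + T a b')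
    (hti : ∀ (a : ℕ → A) (b : ℕ → B), delay (T a b) = T (delay a) (delay b))
    (a : ℕ → A) (b : ℕ → B) :
    diff (T (integ a) (integ b)) =
      T a b + T (delay (integ a)) b + T a (delay (integ b)) := by
  set da := delay (integ a) with hda
  set db := delay (integ b) with hdb
  have h1 : T (integ a) (integ b)
      = T a b + T a db + T da b + T da db := by
    calc T (integ a) (integ b)
        = T (a + da) (b + db) := by rw [hda, hdb, ← integ_key a, ← integ_key b]
      _ = _ := by rw [hlinL, hlinR, hlinR]; abel
  show T (integ a) (integ b) - delay (T (integ a) (integ b)) = _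
  rw [hti, h1]
  abel
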